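/- The algebra (ω, f), where f(a, a) = a and f(a, b) = max(a, b) − 1 for a ≠ b, is not a Ramsey algebra: the sequence b⃗ = ⟨0, 1, 2, ...⟩ has no reduction homogeneous for the set X of even numbers. -/

import Mathlib

namespace RamseyAlg

/- Orderly-term syntax trees over an operation-index type `ι`:
`leaf` is the identity (a single variable), `node g f` applies the basic
operation `g` to the results of the trees in the forest `f`. -/
mutual
  inductive OTree (ι : Type) : Type
    | leaf : OTree ι
    | node : ι → OForest ι → OTree ι
  inductive OForest (ι : Type) : Type
    | nil : OForest ι
    | cons : OTree ι → OForest ι → OForest ι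
end

def OForest.length {ι : Type} : OForest ι → ℕ
  | .nil => 0
  | .cons _ f => f.length + 1

/- Well-formedness: each node applies a `k`-ary basic operation to exactly
`k` subtrees, where `ar` gives the arities. -/
mutual
  def OTree.WF {ι : Type} (ar : ι → ℕ) : OTree ι → Prop
    | .leaf => True
    | .node g f => OForest.length f = ar g ∧ OForest.WF ar f
  def OForest.WF {ι : Type} (ar : ι → ℕ) : OForest ι → Prop
    | .nil => True
    | .cons t f => OTree.WF ar t ∧ OForest.WF ar f
end

/- Evaluation of an orderly term on an input list: the variables of the term
consume an initial segment of the list, in order, each exactly once; what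
remains of the list is returned alongside the value. -/
mutual
  def OTree.evalAux {ι A : Type} (F : ι → List A → A) :
      OTree ι → List A → Option (A × List A)
    | .leaf, [] => none
    | .leaf, a :: rest => some (a, rest)
    | .node g f, l =>
      match OForest.evalAux F f l with
      | none => none
      | some (rs, rest) => some (F g rs, rest)
  def OForest.evalAux {ι A : Type} (F : ι → List A → A) :
      OForest ι → List A → Option (List A × List A)
    | .nil, l => some ([], l)
    | .cons t f, l =>
      match OTree.evalAux F t l with
      | none => none
      | some (r, rest) =>
        match OForest.evalAux F f rest with
        | none => none
        | some (rs, rest') => some (r :: rs, rest')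
end

/- The value of the orderly term `t` on the finite sequence `l`, defined
exactly when the variables of `t` consume all of `l`. -/
def OTree.eval {ι A : Type} (F : ι → List A → A) (t : OTree ι) (l : List A) :
    Option A :=
  match OTree.evalAux F t l with
  | some (a, []) => some a
  | _ => none

/- `Reduction ar F a b` : `a` is a reduction of `b` with respect to `F`, i.e.
there are well-formed orderly terms `t j` applied to consecutive disjoint
finite subsequences of `b` (extracted by the strictly monotone `e`, in blocks
of lengths `len j`) producing the terms of `a` in order. -/
def Reduction {ι A : Type} (ar : ι → ℕ) (F : ι → List A → A)
    (a b : ℕ → A) : Prop :=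
  ∃ (t : ℕ → OTree ι) (len : ℕ → ℕ) (e : ℕ → ℕ),
    StrictMono e ∧ (∀ j, (t j).WF ar) ∧
    ∀ j, (t j).eval F ((List.range (len j)).map
        (fun i => b (e ((∑ m ∈ Finset.range j, len m) + i)))) = some (a j)

/- `FR ar F b` : the set of values of orderly terms over `F` applied to
finite subsequences of `b`. -/
def FR {ι A : Type} (ar : ι → ℕ) (F : ι → List A → A) (b : ℕ → A) : Set A :=
  { x | ∃ (t : OTree ι) (l : List ℕ), t.WF ar ∧ l.Chain' (· < ·) ∧
      t.eval F (l.map b) = some x }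

/- `(A, F)` is a Ramsey algebra: every infinite sequence has, for every
`X ⊆ A`, a reduction homogeneous for `X`. -/
def RamseyAlgebra {ι A : Type} (ar : ι → ℕ) (F : ι → List A → A) : Prop :=
  ∀ (b : ℕ → A) (X : Set A), ∃ a : ℕ → A,
    Reduction ar F a b ∧ (FR ar F a ⊆ X ∨ FR ar F a ∩ X = ∅)

end RamseyAlg


open RamseyAlg in
/-- The binary operation of the direct-limit algebra: `f a a = a` and
`f a b = max a b - 1` for `a ≠ b`; as a list-operation over a one-symbol
binary signature. -/
def dlop : Unit → List ℕ → ℕ :=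
  fun _ l =>
    match l with
    | [a, b] => if a = b then a else max a b - 1
    | _ => 0

section Helper19
open RamseyAlg

mutual
theorem treeLem : ∀ (t : OTree Unit) (l : List ℕ) (v : ℕ) (rest : List ℕ),
    t.WF (fun _ => 2) → l.Pairwise (· < ·) →
    OTree.evalAux dlop t l = some (v, rest) →
    ∃ c, l = c ++ rest ∧ (∀ h ∈ l.head?, h ≤ v) ∧ (∃ m ∈ c, v ≤ m) ∧
      (∀ y ∈ rest, v < y)
  | .leaf, l, v, rest, _, hp, he => by
    cases l with
    | nil => simp [OTree.evalAux] at he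
    | cons a r =>
      simp [OTree.evalAux] at he
      obtain ⟨rfl, rfl⟩ := he
      refine ⟨[a], rfl, by simp, ⟨a, by simp⟩, fun y hy => ?_⟩
      exact (List.pairwise_cons.mp hp).1 y hy
  | .node g f, l, v, rest, hwf, hp, he => by
    obtain ⟨hlen, hfwf⟩ := hwf
    rw [OTree.evalAux] at he
    split at he
    · simp at he
    · rename_i rs rest' hfe
      simp at he
      obtain ⟨rfl, rfl⟩ := he
      obtain ⟨c, rfl, hrl, hrp, hbd⟩ := forestLem f l rs rest' hfwf hp hfe
      rw [hlen] at hrl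
      match rs, hrl with
      | [v1, v2], _ =>
        have h12 : v1 < v2 := (List.pairwise_cons.mp hrp).1 v2 (by simp)
        have hv : dlop g [v1, v2] = v2 - 1 := by
          simp [dlop, Nat.ne_of_lt h12, Nat.max_eq_right (le_of_lt h12)]
        rw [hv]
        obtain ⟨hb1, _, _⟩ := hbd v1 (by simp)
        obtain ⟨_, ⟨m, hm, hm2⟩, hb3⟩ := hbd v2 (by simp)
        refine ⟨c, rfl, fun h hh => le_trans (hb1 h hh) (by omega), ⟨m, hm, by omega⟩,
          fun y hy => by have := hb3 y hy; omega⟩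
theorem forestLem : ∀ (f : OForest Unit) (l : List ℕ) (rs : List ℕ) (rest : List ℕ),
    f.WF (fun _ => 2) → l.Pairwise (· < ·) →
    OForest.evalAux dlop f l = some (rs, rest) →
    ∃ c, l = c ++ rest ∧ rs.length = f.length ∧ rs.Pairwise (· < ·) ∧
      ∀ x ∈ rs, (∀ h ∈ l.head?, h ≤ x) ∧ (∃ m ∈ c, x ≤ m) ∧ (∀ y ∈ rest, x < y)
  | .nil, l, rs, rest, _, hp, he => by
    simp [OForest.evalAux] at he
    obtain ⟨rfl, rfl⟩ := he
    exact ⟨[], by simp, rfl, by simp, by simp⟩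
  | .cons t f, l, rs, rest, hwf, hp, he => by
    obtain ⟨htwf, hfwf⟩ := hwf
    rw [OForest.evalAux] at he
    split at he
    · simp at he
    · rename_i v rest1 hte
      split at he
      · simp at he
      · rename_i rs' rest' hfe
        simp at he
        obtain ⟨rfl, rfl⟩ := he
        obtain ⟨c1, rfl, htb1, ⟨m1, hm1, hm1'⟩, htb3⟩ := treeLem t l v rest1 htwf hp hte
        have hp1 : rest1.Pairwise (· < ·) := (List.pairwise_append.mp hp).2.1
        obtain ⟨c2, rfl, hrl, hrp, hbd⟩ := forestLem f rest1 rs' rest' hfwf hp1 hfe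
        have hvlt : ∀ x ∈ rs', v < x := by
          intro x hx
          obtain ⟨hl, ⟨m, hm, hm'⟩, _⟩ := hbd x hx
          cases c2 with
          | nil => simp at hm
          | cons a cs =>
            have h1 : a ≤ x := hl a (by simp)
            have h2 : v < a := htb3 a (by simp)
            omega
        refine ⟨c1 ++ c2, by simp, by simp [hrl, OForest.length], ?_, ?_⟩
        · exact List.pairwise_cons.mpr ⟨hvlt, hrp⟩
        · intro x hx
          rcases List.mem_cons.mp hx with rfl | hx'
          · refine ⟨htb1, ⟨m1, by simp [hm1], hm1'⟩, fun y hy => htb3 y ?_⟩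
            exact List.mem_append_right _ hy
          · obtain ⟨_, ⟨m, hm, hm'⟩, hb3⟩ := hbd x hx'
            refine ⟨fun h hh => le_of_lt (lt_of_le_of_lt (htb1 h hh) (hvlt x hx')), 
              ⟨m, by simp [hm], hm'⟩, hb3⟩
end

theorem evalLem (t : OTree Unit) (l : List ℕ) (v : ℕ)
    (hwf : t.WF (fun _ => 2)) (hp : l.Pairwise (· < ·))
    (he : OTree.eval dlop t l = some v) :
    (∀ h ∈ l.head?, h ≤ v) ∧ ∃ m ∈ l, v ≤ m := by
  rw [OTree.eval] at he
  split at he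
  · rename_i a hae
    obtain ⟨c, hc, h1, h2, _⟩ := treeLem t l a [] hwf hp hae
    simp at hc
    subst hc
    simp at he
    subst he
    exact ⟨h1, by simpa using h2⟩
  · simp at he


theorem key : ¬ ∃ a : ℕ → ℕ, Reduction (fun _ : Unit => 2) dlop a (fun n => n) ∧
    (FR (fun _ : Unit => 2) dlop a ⊆ {n : ℕ | Even n} ∨
      FR (fun _ : Unit => 2) dlop a ∩ {n : ℕ | Even n} = ∅) := by
  rintro ⟨a, ⟨t, len, e, hemono, hwf, heval⟩, hhom⟩
  set S : ℕ → ℕ := fun j => ∑ m ∈ Finset.range j, len m with hS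
  have hLp : ∀ j, (((List.range (len j)).map
      (fun i => (fun n : ℕ => n) (e (S j + i)))).Pairwise (· < ·)) := by
    intro j
    rw [List.pairwise_map]
    exact List.pairwise_lt_range (n := len j) |>.imp (fun h => hemono (by omega))
  have hfact : ∀ j, (∀ h ∈ ((List.range (len j)).map
        (fun i => (fun n : ℕ => n) (e (S j + i)))).head?, h ≤ a j) ∧
      ∃ m ∈ (List.range (len j)).map (fun i => (fun n : ℕ => n) (e (S j + i))),
        a j ≤ m :=
    fun j => evalLem _ _ _ (hwf j) (hLp j) (heval j)
  have hub : ∀ j, ∃ i < len j, a j ≤ e (S j + i) := by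
    intro j
    obtain ⟨_, m, hm, hma⟩ := hfact j
    simp at hm
    obtain ⟨i, hi, rfl⟩ := hm
    exact ⟨i, hi, hma⟩
  have hlen : ∀ j, 1 ≤ len j := by
    intro j
    obtain ⟨i, hi, _⟩ := hub j
    omega
  have hlb : ∀ j, e (S j) ≤ a j := by
    intro j
    obtain ⟨hl, _⟩ := hfact j
    apply hl
    obtain ⟨k, hk⟩ : ∃ k, len j = k + 1 := ⟨len j - 1, by have := hlen j; omega⟩
    rw [hk, List.range_succ_eq_map]
    simp
  have h01 : a 0 < a 1 := by
    obtain ⟨i, hi, h0⟩ := hub 0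
    have hS0 : S 0 = 0 := by simp [hS]
    have hS1 : S 1 = len 0 := by simp [hS]
    have : e (S 0 + i) < e (S 1) := hemono (by omega)
    have := hlb 1
    omega
  have mem1 : a 1 ∈ FR (fun _ : Unit => 2) dlop a := by
    refine ⟨OTree.leaf, [1], trivial, by simp [List.Chain'], ?_⟩
    simp [OTree.eval, OTree.evalAux]
  have mem2 : a 1 - 1 ∈ FR (fun _ : Unit => 2) dlop a := by
    refine ⟨OTree.node () (.cons .leaf (.cons .leaf .nil)), [0, 1],
      ⟨rfl, trivial, trivial, trivial⟩, by simp [List.Chain'], ?_⟩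
    simp [OTree.eval, OTree.evalAux, OForest.evalAux, dlop, Nat.ne_of_lt h01,
      Nat.max_eq_right (le_of_lt h01)]
  rcases hhom with hsub | hdisj
  · rcases Nat.even_or_odd (a 1) with hev | hod
    · have := hsub mem2
      simp only [Set.mem_setOf_eq, Nat.even_iff] at this hev
      omega
    · have := hsub mem1
      simp only [Set.mem_setOf_eq, Nat.even_iff] at this
      rw [Nat.odd_iff] at hod
      omega
  · rcases Nat.even_or_odd (a 1) with hev | hod
    · exact Set.eq_empty_iff_forall_notMem.mp hdisj (a 1) ⟨mem1, hev⟩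
    · refine Set.eq_empty_iff_forall_notMem.mp hdisj (a 1 - 1) ⟨mem2, ?_⟩
      simp only [Set.mem_setOf_eq, Nat.even_iff]
      rw [Nat.odd_iff] at hod
      omega

end Helper19

open RamseyAlg in
/-- The algebra `(ω, f)` with `f a a = a` and `f a b = max a b - 1`
for `a ≠ b` is not a Ramsey algebra: the sequence `⟨0, 1, 2, ...⟩` has no reduction
homogeneous for the set of even numbers. -/
theorem stmt19 :
    ¬ RamseyAlgebra (fun _ : Unit => 2) dlop ∧
    ¬ ∃ a : ℕ → ℕ, Reduction (fun _ : Unit => 2) dlop a (fun n => n) ∧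
        (FR (fun _ : Unit => 2) dlop a ⊆ {n : ℕ | Even n} ∨
          FR (fun _ : Unit => 2) dlop a ∩ {n : ℕ | Even n} = ∅) := by
  refine ⟨fun h => ?_, key⟩
  obtain ⟨a, hred, hhom⟩ := h (fun n => n) {n | Even n}
  exact key ⟨a, hred, hhom⟩
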